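/- Let G be a graph with bipartition (A, B) where |A| = ⌊Δ²/log^{3/2}Δ⌋, |B| = Δ, every vertex of B has exactly Δ neighbours in A, and for every S ⊆ A with |S| ≤ Δ/log^{5/4}Δ, the number of vertices of B adjacent to exactly one vertex of S is at most (e^{−1} + 1/(3 log^{1/9}Δ))|B|. Then for sufficiently large Δ, G has no proper (Δ+1)-colouring that is ((1 − e^{−1})Δ − Δ/log^{1/9}Δ)-peaceful. -/

import Mathlib

open Filter

private lemma stmt11_aux_event : ∃ Δ₀:ℕ, ∀ Δ:ℕ, Δ₀ ≤ Δ →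
    1 ≤ Real.log Δ ∧ 6 ≤ (Real.log Δ)^((5:ℝ)/36) ∧ 6*(Real.log Δ)^((1:ℝ)/9) ≤ Δ := by
  have hlog : Tendsto (fun n:ℕ => Real.log n) atTop atTop :=
    Real.tendsto_log_atTop.comp tendsto_natCast_atTop_atTop
  have e1 : ∀ᶠ n:ℕ in atTop, 1 ≤ Real.log n := hlog.eventually_ge_atTop 1
  have e2 : ∀ᶠ n:ℕ in atTop, 6 ≤ (Real.log n)^((5:ℝ)/36) :=
    (((tendsto_rpow_atTop (by norm_num : (0:ℝ) < 5/36)).comp hlog).eventually_ge_atTop 6)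
  have e3' : ∀ᶠ x:ℝ in atTop, ‖Real.log x‖ ≤ (1/6) * ‖x‖ :=
    Real.isLittleO_log_id_atTop.def (by norm_num)
  have e3 : ∀ᶠ n:ℕ in atTop, 6 * (Real.log n)^((1:ℝ)/9) ≤ n := by
    filter_upwards [e1, tendsto_natCast_atTop_atTop.eventually e3', eventually_ge_atTop 1]
      with n h1 h2 h3
    have hn : (0:ℝ) ≤ (n:ℝ) := Nat.cast_nonneg n
    have h2' : Real.log n ≤ (1/6) * n := by
      rwa [Real.norm_eq_abs, Real.norm_eq_abs, abs_of_nonneg (le_trans zero_le_one h1),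
        abs_of_nonneg hn] at h2
    have : (Real.log n)^((1:ℝ)/9) ≤ Real.log n := by
      calc (Real.log n)^((1:ℝ)/9) ≤ (Real.log n)^(1:ℝ) :=
        Real.rpow_le_rpow_of_exponent_le h1 (by norm_num)
      _ = Real.log n := Real.rpow_one _
    nlinarith
  obtain ⟨N, hN⟩ := eventually_atTop.1 (e1.and (e2.and e3))
  exact ⟨N, fun Δ h => ⟨(hN Δ h).1, (hN Δ h).2.1, (hN Δ h).2.2⟩⟩

private lemma stmt11_aux_arith (D L l4 : ℝ) (hD : 1 ≤ D) (hL : 1 ≤ L) (hl4 : 6*L ≤ l4)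
    (hDL : 6*L ≤ D) :
    ¬ (D*((Real.exp 1)⁻¹*D + D/L) ≤ (D+1)*(((Real.exp 1)⁻¹ + 1/(3*L))*D) + (D/l4)*D) := by
  intro h
  set e := (Real.exp 1)⁻¹ with he
  have he0 : 0 < e := by positivity
  have he1 : e < 1 := by
    rw [he, inv_lt_one_iff₀]; right; linarith [Real.add_one_le_exp (1:ℝ)]
  have hL0 : (0:ℝ) < L := lt_of_lt_of_le one_pos hL
  have hl40 : (0:ℝ) < l4 := lt_of_lt_of_le (by linarith) hl4
  have hD0 : (0:ℝ) < D := lt_of_lt_of_le one_pos hD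
  have hA : (D/l4)*D ≤ D^2/(6*L) := by
    have : D^2/l4 ≤ D^2/(6*L) := by
      apply div_le_div_of_nonneg_left (by positivity) (by positivity) hl4
    calc (D/l4)*D = D^2/l4 := by ring
    _ ≤ D^2/(6*L) := this
  have hB : (D+1)*(e + 1/(3*L))*D ≤ (D+1)*e*D + 2*D^2/(3*L) := by
    have h1 : (D+1)*(1/(3*L))*D ≤ 2*D^2/(3*L) := by
      have heq : (D+1)*(1/(3*L))*D = ((D+1)*D)/(3*L) := by ring
      rw [heq]
      apply div_le_div_of_nonneg_right ?_ (by positivity)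
      nlinarith
    nlinarith [h1]
  have hC : D*e < D^2/(6*L) := by
    have h2 : D ≤ D^2/(6*L) := by
      rw [le_div_iff₀ (by positivity)]
      nlinarith
    nlinarith
  have hE : D^2/(6*L) + 2*D^2/(3*L) + D^2/(6*L) = D^2/L := by
    field_simp; ring
  have hexp : D*(e*D + D/L) = D^2*e + D^2/L := by field_simp
  have hexp2 : (D+1)*((e + 1/(3*L))*D) = (D+1)*(e+1/(3*L))*D := by ring
  have hexp3 : (D+1)*e*D = D^2*e + D*e := by ring
  rw [hexp, hexp2] at h
  nlinarith [h, hA, hB, hC, hE, hexp3]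

/-- The bipartite graphs of Lemma `lem_upperbound_bipartite` have no
`((1−e⁻¹)Δ − Δ/log^{1/9}Δ)`-peaceful proper `(Δ+1)`-colouring. -/
theorem stmt11 :
    ∃ Δ₀ : ℕ, ∀ Δ : ℕ, Δ₀ ≤ Δ →
    ∀ (V : Type) [Fintype V] [DecidableEq V] (G : SimpleGraph V) (A B : Finset V),
      (∀ v, v ∈ A ∨ v ∈ B) → Disjoint A B →
      (∀ u v, G.Adj u v → (u ∈ A ∧ v ∈ B) ∨ (u ∈ B ∧ v ∈ A)) →
      A.card = ⌊(Δ : ℝ) ^ 2 / (Real.log Δ) ^ ((3 : ℝ) / 2)⌋₊ →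
      B.card = Δ →
      (∀ b ∈ B, (G.neighborSet b).ncard = Δ ∧ G.neighborSet b ⊆ ↑A) →
      (∀ S : Finset V, S ⊆ A → (S.card : ℝ) ≤ (Δ : ℝ) / (Real.log Δ) ^ ((5 : ℝ) / 4) →
        ({b ∈ (B : Set V) | {w ∈ G.neighborSet b | w ∈ S}.ncard = 1}.ncard : ℝ) ≤
          ((Real.exp 1)⁻¹ + 1 / (3 * (Real.log Δ) ^ ((1 : ℝ) / 9))) * B.card) →
      ¬ ∃ f : V → Fin (Δ + 1),
          (∀ u v, G.Adj u v → f u ≠ f v) ∧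
          ∀ v : V, ({w ∈ G.neighborSet v |
              ∃ u ∈ G.neighborSet v, u ≠ w ∧ f u = f w}.ncard : ℝ) ≤
            (1 - (Real.exp 1)⁻¹) * Δ - (Δ : ℝ) / (Real.log Δ) ^ ((1 : ℝ) / 9) := by
  obtain ⟨Δ₀, hΔ₀⟩ := stmt11_aux_event
  refine ⟨max Δ₀ 1, fun Δ hΔ V _ _ G A B hcover hdisj hbip hAcard hBcard hdeg hS => ?_⟩
  rintro ⟨f, hproper, hpeace⟩
  classical
  obtain ⟨h1log, h536, h19⟩ := hΔ₀ Δ (le_trans (le_max_left _ _) hΔ)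
  have hΔ1 : 1 ≤ Δ := le_trans (le_max_right _ _) hΔ
  have hΔ0 : (0:ℝ) < (Δ:ℝ) := by exact_mod_cast Nat.pos_of_ne_zero (by omega)
  set lg := Real.log Δ with hlg
  have hlg0 : 0 < lg := lt_of_lt_of_le one_pos h1log
  set L := lg ^ ((1:ℝ)/9) with hLdef
  set K := lg ^ ((5:ℝ)/4) with hKdef
  set l4 := lg ^ ((1:ℝ)/4) with hl4def
  have hL1 : 1 ≤ L := Real.one_le_rpow h1log (by norm_num)
  have hK0 : 0 < K := Real.rpow_pos_of_pos hlg0 _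
  have hl40 : 0 < l4 := Real.rpow_pos_of_pos hlg0 _
  have hL0 : 0 < L := lt_of_lt_of_le one_pos hL1
  -- l4 = L * lg^{5/36} ≥ 6 L
  have hl4L : 6 * L ≤ l4 := by
    have : l4 = L * lg ^ ((5:ℝ)/36) := by
      rw [hl4def, hLdef, ← Real.rpow_add hlg0]; norm_num
    rw [this]
    calc 6 * L = L * 6 := by ring
    _ ≤ L * lg ^ ((5:ℝ)/36) := by
        apply mul_le_mul_of_nonneg_left h536 (le_of_lt hL0)
  have hDL : 6 * L ≤ (Δ:ℝ) := by rw [hLdef]; exact h19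
  -- K * l4 = lg^{3/2}
  have hKl4 : K * l4 = lg ^ ((3:ℝ)/2) := by
    rw [hKdef, hl4def, ← Real.rpow_add hlg0]; norm_num
  -- neighbourhood finsets
  set Nb : V → Finset V := fun b => (G.neighborSet b).toFinset with hNb
  have hNbmem : ∀ b w, w ∈ Nb b ↔ w ∈ G.neighborSet b := fun b w => Set.mem_toFinset
  have hNbcard : ∀ b ∈ B, (Nb b).card = Δ := by
    intro b hb
    rw [← Set.ncard_eq_toFinset_card']
    exact (hdeg b hb).1
  -- colour classes in A
  set Sc : Fin (Δ+1) → Finset V := fun c => A.filter (fun a => f a = c) with hScdef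
  have hfiber : ∑ c : Fin (Δ+1), (Sc c).card = A.card :=
    (Finset.card_eq_sum_card_fiberwise (fun a _ => Finset.mem_univ (f a))).symm
  -- unique-colour vertices in N(b)
  set Ub : V → Finset V := fun b =>
    (Nb b).filter (fun w => ¬∃ u ∈ G.neighborSet b, u ≠ w ∧ f u = f w) with hUb
  set uniq : V → Finset (Fin (Δ+1)) := fun b =>
    Finset.univ.filter (fun c => ((Nb b).filter (fun w => f w = c)).card = 1) with huniqdef
  have huniq : ∀ b, (Ub b).card = (uniq b).card := by
    intro b
    apply Finset.card_bij (fun w _ => f w)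
    · intro w hw
      simp only [hUb, Finset.mem_filter, hNbmem] at hw
      obtain ⟨hw1, hw2⟩ := hw
      push_neg at hw2
      simp only [huniqdef, Finset.mem_filter, Finset.mem_univ, true_and]
      rw [Finset.card_eq_one]
      refine ⟨w, ?_⟩
      ext u
      simp only [Finset.mem_filter, Finset.mem_singleton, hNbmem]
      constructor
      · rintro ⟨hu1, hu2⟩
        by_contra hne
        exact hw2 u hu1 hne hu2
      · rintro rfl; exact ⟨hw1, rfl⟩
    · intro w hw w' hw' hff
      simp only [hUb, Finset.mem_filter, hNbmem] at hw hw'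
      obtain ⟨h1', h2'⟩ := hw'
      push_neg at h2'
      by_contra hne
      exact h2' w hw.1 hne hff
    · intro c hc
      simp only [huniqdef, Finset.mem_filter, Finset.mem_univ, true_and] at hc
      obtain ⟨w, hw⟩ := Finset.card_eq_one.1 hc
      have hwmem : w ∈ (Nb b).filter (fun w => f w = c) := by
        rw [hw]; exact Finset.mem_singleton_self w
      simp only [Finset.mem_filter, hNbmem] at hwmem
      refine ⟨w, ?_, hwmem.2⟩
      simp only [hUb, Finset.mem_filter, hNbmem]
      refine ⟨hwmem.1, ?_⟩
      rintro ⟨u, hu1, hu2, hu3⟩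
      have : u ∈ (Nb b).filter (fun w => f w = c) := by
        simp only [Finset.mem_filter, hNbmem]
        exact ⟨hu1, hu3.trans hwmem.2⟩
      rw [hw, Finset.mem_singleton] at this
      exact hu2 this
  -- double counting
  set Bc : Fin (Δ+1) → Finset V := fun c =>
    B.filter (fun b => ((Nb b).filter (fun w => f w = c)).card = 1) with hBcdef
  have hdouble : ∑ b ∈ B, (uniq b).card = ∑ c : Fin (Δ+1), (Bc c).card := by
    simp only [huniqdef, hBcdef, Finset.card_filter]
    rw [Finset.sum_comm]
  -- lower bound per b ∈ B
  have hlower : ∀ b ∈ B, (Real.exp 1)⁻¹ * Δ + (Δ:ℝ)/L ≤ ((uniq b).card : ℝ) := by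
    intro b hb
    have hsplit := Finset.card_filter_add_card_filter_not
      (s := Nb b) (p := fun w => ∃ u ∈ G.neighborSet b, u ≠ w ∧ f u = f w)
    have hbadset : ({w ∈ G.neighborSet b | ∃ u ∈ G.neighborSet b, u ≠ w ∧ f u = f w}.ncard : ℝ)
        = (((Nb b).filter (fun w => ∃ u ∈ G.neighborSet b, u ≠ w ∧ f u = f w)).card : ℝ) := by
      congr 1
      rw [← Set.ncard_coe_finset]
      congr 1
      ext w
      simp only [Finset.coe_filter, Set.mem_setOf_eq, hNbmem, Set.mem_setOf_eq]
    have hp := hpeace b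
    rw [hbadset] at hp
    have hcard : ((Nb b).card : ℝ) = Δ := by rw [hNbcard b hb]
    have := huniq b
    have hcast : (((Nb b).filter (fun w => ∃ u ∈ G.neighborSet b, u ≠ w ∧ f u = f w)).card : ℝ)
        + ((Ub b).card : ℝ) = ((Nb b).card : ℝ) := by
      rw [hUb]; exact_mod_cast congrArg Nat.cast hsplit
    have huc : ((Ub b).card : ℝ) = ((uniq b).card : ℝ) := by exact_mod_cast this
    rw [huc] at hcast
    rw [hLdef] at *
    linarith [hp, hcast, hcard.ge, hcard.le]
  -- rewrite Bc with Sc for b ∈ B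
  have hBcSc : ∀ c, Bc c = B.filter (fun b => ((Nb b).filter (fun w => w ∈ Sc c)).card = 1) := by
    intro c
    rw [hBcdef]
    apply Finset.filter_congr
    intro b hb
    have : (Nb b).filter (fun w => f w = c) = (Nb b).filter (fun w => w ∈ Sc c) := by
      apply Finset.filter_congr
      intro w hw
      have hwA : w ∈ A := (hdeg b hb).2 ((hNbmem b w).1 hw)
      simp only [hScdef, Finset.mem_filter]
      constructor
      · intro h; exact ⟨hwA, h⟩
      · intro h; exact h.2
    simp [this]
  -- per-colour upper bound, small colours
  have hsmall : ∀ c : Fin (Δ+1), ((Sc c).card : ℝ) ≤ (Δ:ℝ)/K →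
      ((Bc c).card : ℝ) ≤ ((Real.exp 1)⁻¹ + 1/(3*L)) * Δ := by
    intro c hc
    have h1 := hS (Sc c) (Finset.filter_subset _ _) (by rw [hKdef] at *; exact hc)
    have hset : {b ∈ (B : Set V) | {w ∈ G.neighborSet b | w ∈ Sc c}.ncard = 1}.ncard
        = (Bc c).card := by
      rw [hBcSc c, ← Set.ncard_coe_finset]
      congr 1
      ext b
      simp only [Finset.coe_filter, Set.mem_setOf_eq]
      constructor
      · rintro ⟨hb, h2⟩
        refine ⟨hb, ?_⟩
        rw [← h2, ← Set.ncard_coe_finset]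
        congr 1
        ext w
        simp only [Finset.coe_filter, Set.mem_setOf_eq, hNbmem]
      · rintro ⟨hb, h2⟩
        refine ⟨hb, ?_⟩
        rw [← h2, ← Set.ncard_coe_finset]
        congr 1
        ext w
        simp only [Finset.coe_filter, Set.mem_setOf_eq, hNbmem]
    rw [hset, hBcard] at h1
    rw [hLdef] at *
    exact h1
  -- trivial upper bound
  have htriv : ∀ c : Fin (Δ+1), ((Bc c).card : ℝ) ≤ (Δ:ℝ) := by
    intro c
    have : (Bc c).card ≤ B.card := Finset.card_le_card (by rw [hBcdef]; exact Finset.filter_subset _ _)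
    rw [hBcard] at this
    exact_mod_cast this
  -- big colours
  set bigs : Finset (Fin (Δ+1)) :=
    Finset.univ.filter (fun c => ¬ ((Sc c).card : ℝ) ≤ (Δ:ℝ)/K) with hbigsdef
  have hbigsbound : (bigs.card : ℝ) ≤ (Δ:ℝ)/l4 := by
    have hstep : (bigs.card : ℝ) * ((Δ:ℝ)/K) ≤ (Δ:ℝ)^2 / lg^((3:ℝ)/2) := by
      have h1 : ∀ c ∈ bigs, (Δ:ℝ)/K ≤ ((Sc c).card : ℝ) := by
        intro c hc
        simp only [hbigsdef, Finset.mem_filter] at hc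
        exact le_of_lt (not_le.1 hc.2)
      have h2 := Finset.card_nsmul_le_sum bigs (fun c => ((Sc c).card : ℝ)) ((Δ:ℝ)/K) h1
      rw [nsmul_eq_mul] at h2
      have h3 : ∑ c ∈ bigs, ((Sc c).card : ℝ) ≤ ∑ c : Fin (Δ+1), ((Sc c).card : ℝ) :=
        Finset.sum_le_sum_of_subset_of_nonneg (Finset.subset_univ _)
          (fun c _ _ => by positivity)
      have h4 : ∑ c : Fin (Δ+1), ((Sc c).card : ℝ) = (A.card : ℝ) := by
        exact_mod_cast congrArg Nat.cast hfiber
      have h5 : (A.card : ℝ) ≤ (Δ:ℝ)^2 / lg^((3:ℝ)/2) := by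
        rw [hAcard]
        exact Nat.floor_le (by positivity)
      linarith
    have hpos : 0 < (Δ:ℝ)/K := by positivity
    rw [← mul_le_mul_iff_of_pos_right hpos]
    calc (bigs.card : ℝ) * ((Δ:ℝ)/K) ≤ (Δ:ℝ)^2 / lg^((3:ℝ)/2) := hstep
    _ = (Δ:ℝ)/l4 * ((Δ:ℝ)/K) := by
        rw [← hKl4]; field_simp
  -- sum upper bound
  have hupper : (∑ c : Fin (Δ+1), ((Bc c).card : ℝ)) ≤
      ((Δ:ℝ)+1) * (((Real.exp 1)⁻¹ + 1/(3*L)) * Δ) + ((Δ:ℝ)/l4) * Δ := by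
    rw [← Finset.sum_filter_add_sum_filter_not Finset.univ
      (fun c => ((Sc c).card : ℝ) ≤ (Δ:ℝ)/K) (fun c => ((Bc c).card : ℝ))]
    have hpart1 : ∑ c ∈ Finset.univ.filter (fun c => ((Sc c).card : ℝ) ≤ (Δ:ℝ)/K),
        ((Bc c).card : ℝ) ≤ ((Δ:ℝ)+1) * (((Real.exp 1)⁻¹ + 1/(3*L)) * Δ) := by
      calc ∑ c ∈ Finset.univ.filter (fun c => ((Sc c).card : ℝ) ≤ (Δ:ℝ)/K), ((Bc c).card : ℝ)
          ≤ ∑ _c ∈ Finset.univ.filter (fun c => ((Sc c).card : ℝ) ≤ (Δ:ℝ)/K),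
            (((Real.exp 1)⁻¹ + 1/(3*L)) * Δ) := by
            apply Finset.sum_le_sum
            intro c hc
            simp only [Finset.mem_filter] at hc
            exact hsmall c hc.2
      _ = ((Finset.univ.filter (fun c => ((Sc c).card : ℝ) ≤ (Δ:ℝ)/K)).card : ℝ)
            * (((Real.exp 1)⁻¹ + 1/(3*L)) * Δ) := by
            rw [Finset.sum_const, nsmul_eq_mul]
      _ ≤ ((Δ:ℝ)+1) * (((Real.exp 1)⁻¹ + 1/(3*L)) * Δ) := by
            apply mul_le_mul_of_nonneg_right
            · have : (Finset.univ.filter (fun c => ((Sc c).card : ℝ) ≤ (Δ:ℝ)/K)).card ≤ Δ+1 := by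
                calc _ ≤ (Finset.univ : Finset (Fin (Δ+1))).card := Finset.card_le_card (Finset.filter_subset _ _)
                _ = Δ+1 := by simp
              exact_mod_cast this
            · positivity
    have hpart2 : ∑ c ∈ bigs, ((Bc c).card : ℝ) ≤ ((Δ:ℝ)/l4) * Δ := by
      calc ∑ c ∈ bigs, ((Bc c).card : ℝ) ≤ ∑ _c ∈ bigs, (Δ:ℝ) :=
        Finset.sum_le_sum (fun c _ => htriv c)
      _ = (bigs.card : ℝ) * Δ := by rw [Finset.sum_const, nsmul_eq_mul]
      _ ≤ ((Δ:ℝ)/l4) * Δ := mul_le_mul_of_nonneg_right hbigsbound (le_of_lt hΔ0)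
    have : (Finset.univ.filter (fun c => ¬ ((Sc c).card : ℝ) ≤ (Δ:ℝ)/K)) = bigs := rfl
    rw [this]
    linarith
  -- sum lower bound
  have hlowersum : (Δ:ℝ) * ((Real.exp 1)⁻¹ * Δ + (Δ:ℝ)/L) ≤ ∑ c : Fin (Δ+1), ((Bc c).card : ℝ) := by
    have h1 : (Δ:ℝ) * ((Real.exp 1)⁻¹ * Δ + (Δ:ℝ)/L) ≤ ∑ b ∈ B, ((uniq b).card : ℝ) := by
      calc (Δ:ℝ) * ((Real.exp 1)⁻¹ * Δ + (Δ:ℝ)/L)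
          = (B.card : ℝ) * ((Real.exp 1)⁻¹ * Δ + (Δ:ℝ)/L) := by rw [hBcard]
      _ ≤ ∑ b ∈ B, ((uniq b).card : ℝ) := by
          rw [← nsmul_eq_mul]
          exact Finset.card_nsmul_le_sum B _ _ hlower
    have h2 : ∑ b ∈ B, ((uniq b).card : ℝ) = ∑ c : Fin (Δ+1), ((Bc c).card : ℝ) := by
      exact_mod_cast congrArg Nat.cast hdouble
    linarith
  -- contradiction
  have hD1 : (1:ℝ) ≤ (Δ:ℝ) := by exact_mod_cast hΔ1
  exact stmt11_aux_arith (Δ:ℝ) L l4 hD1 hL1 hl4L hDL (le_trans hlowersum hupper)
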